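/- Let B be a real n×n matrix with nonnegative off-diagonal entries (B_{ij} ≥ 0 for i ≠ j) and zero column sums (∑_i B_{ij} = 0 for every j), and let τ > 0. Then the matrix I − τB is invertible, and its inverse (I − τB)⁻¹ is nonnegative, has strictly positive diagonal entries, and has unit column sums. -/

import Mathlib

open Matrix Finset Filter
open scoped NNReal

attribute [local instance] Matrix.linftyOpNormedRing Matrix.linftyOpNormedAlgebra

section Aux

variable {n : ℕ}

/-- Every entry of a matrix is bounded in absolute value by the `L∞-L1` operator norm. -/
lemma entry_abs_le_linfty_norm (A : Matrix (Fin n) (Fin n) ℝ) (i j : Fin n) :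
    |A i j| ≤ ‖A‖ := by
  rw [Matrix.linfty_opNorm_def]
  have h1 : ‖A i j‖₊ ≤ ∑ k, ‖A i k‖₊ :=
    Finset.single_le_sum (f := fun k => ‖A i k‖₊) (fun _ _ => zero_le) (mem_univ j)
  have h2 : (∑ k, ‖A i k‖₊) ≤ (Finset.univ : Finset (Fin n)).sup fun i => ∑ k, ‖A i k‖₊ :=
    Finset.le_sup (f := fun i => ∑ k, ‖A i k‖₊) (mem_univ i)
  calc |A i j| = (‖A i j‖₊ : ℝ) := by simp [Real.norm_eq_abs]
    _ ≤ ((Finset.univ.sup fun i => ∑ k, ‖A i k‖₊ : ℝ≥0) : ℝ) := by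
        exact_mod_cast h1.trans h2

end Aux

/-- If `B` has nonnegative off-diagonal entries and zero column sums, then for every `τ > 0`
the matrix `I - τ • B` is invertible and its inverse is nonnegative, has strictly positive
diagonal entries, and has unit column sums. -/
theorem implicit_osmosis_operator {n : ℕ} (B : Matrix (Fin n) (Fin n) ℝ)
    (hoff : ∀ i j, i ≠ j → 0 ≤ B i j) (hcol : ∀ j, ∑ i, B i j = 0)
    (τ : ℝ) (hτ : 0 < τ) :
    IsUnit (1 - τ • B) ∧
      (∀ i j, 0 ≤ (1 - τ • B)⁻¹ i j) ∧
      (∀ i, 0 < (1 - τ • B)⁻¹ i i) ∧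
      (∀ j, ∑ i, (1 - τ • B)⁻¹ i j = 1) := by
  set A : Matrix (Fin n) (Fin n) ℝ := τ • B with hA
  have hAoff : ∀ i j, i ≠ j → 0 ≤ A i j := fun i j h => by
    simpa [hA] using mul_nonneg hτ.le (hoff i j h)
  have hAcol : ∀ j, ∑ i, A i j = 0 := fun j => by
    simp [hA, Matrix.smul_apply, ← Finset.mul_sum, hcol j]
  have hAdiag : ∀ j, A j j ≤ 0 := by
    intro j
    have h := hAcol j
    rw [← Finset.add_sum_erase _ _ (mem_univ j)] at h
    have hsum : 0 ≤ ∑ i ∈ univ.erase j, A i j :=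
      Finset.sum_nonneg fun i hi => hAoff i j (Finset.ne_of_mem_erase hi)
    linarith
  set d : ℝ := ∑ j, (-(A j j)) with hd
  have hd0 : 0 ≤ d := Finset.sum_nonneg fun j _ => neg_nonneg.mpr (hAdiag j)
  have hdle : ∀ j, -(A j j) ≤ d := fun j =>
    Finset.single_le_sum (f := fun j => -(A j j)) (fun i _ => neg_nonneg.mpr (hAdiag i)) (mem_univ j)
  set c : ℝ := 1 + d with hc
  have hc1 : (1 : ℝ) ≤ c := by linarith
  have hc0 : (0 : ℝ) < c := by linarith
  set K : Matrix (Fin n) (Fin n) ℝ := (c - 1) • (1 : Matrix (Fin n) (Fin n) ℝ) + A with hK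
  set x : Matrix (Fin n) (Fin n) ℝ := c⁻¹ • Kᵀ with hx
  have hKentry : ∀ i j, 0 ≤ K i j := by
    intro i j
    by_cases h : i = j
    · subst h
      have := hdle i
      simp [hK, Matrix.add_apply, Matrix.smul_apply, Matrix.one_apply, hc]
      linarith
    · have := hAoff i j h
      simp [hK, Matrix.add_apply, Matrix.smul_apply, Matrix.one_apply, h]
      linarith
  have hxentry : ∀ i j, 0 ≤ x i j := fun i j => by
    simpa [hx, Matrix.smul_apply, Matrix.transpose_apply] using
      mul_nonneg (inv_nonneg.mpr hc0.le) (hKentry j i)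
  have hKcol : ∀ j, ∑ i, K i j = c - 1 := by
    intro j
    simp [hK, Matrix.add_apply, Matrix.smul_apply, Matrix.one_apply, Finset.sum_add_distrib,
      hAcol j, Finset.sum_ite_eq, mem_univ]
  have hxrow : ∀ i, ∑ j, x i j = (c - 1) / c := by
    intro i
    simp only [hx, Matrix.smul_apply, Matrix.transpose_apply, smul_eq_mul, ← Finset.mul_sum,
      hKcol i]
    rw [inv_mul_eq_div]
  -- norm bound
  have hxnorm : ‖x‖ < 1 := by
    rw [Matrix.linfty_opNorm_def]
    rw [← NNReal.coe_one, NNReal.coe_lt_coe]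
    refine Finset.sup_lt_iff (by norm_num) |>.mpr ?_
    intro i _
    rw [← NNReal.coe_lt_coe, NNReal.coe_sum, NNReal.coe_one]
    have heq : ∀ j : Fin n, ((‖x i j‖₊ : ℝ≥0) : ℝ) = x i j := fun j => by
      simp [Real.norm_of_nonneg (hxentry i j)]
    rw [Finset.sum_congr rfl fun j _ => heq j, hxrow i, div_lt_one hc0]
    linarith
  set u : (Matrix (Fin n) (Fin n) ℝ)ˣ := Units.oneSub x hxnorm with hu
  set S : Matrix (Fin n) (Fin n) ℝ := ↑u⁻¹ with hS
  have huval : (u : Matrix (Fin n) (Fin n) ℝ) = 1 - x := rfl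
  have hSval : S * (1 - x) = 1 := by rw [← huval]; exact u.inv_val
  have hvalS : (1 - x) * S = 1 := by rw [← huval]; exact u.val_inv
  -- M = 1 - A,  Mᵀ = c • (1 - x)
  set M : Matrix (Fin n) (Fin n) ℝ := 1 - A with hM
  have hMT : Mᵀ = c • (1 - x) := by
    ext i j
    simp [hM, hx, hK, Matrix.sub_apply, Matrix.smul_apply, Matrix.transpose_apply,
      Matrix.add_apply, Matrix.one_apply]
    by_cases h : i = j
    · simp [h]; field_simp; ring
    · have h' : ¬ j = i := fun e => h e.symm
      simp [h, h']; field_simp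
  set N : Matrix (Fin n) (Fin n) ℝ := c⁻¹ • Sᵀ with hN
  have hMN : M * N = 1 := by
    have h1 : (c⁻¹ • S) * Mᵀ = 1 := by
      rw [hMT, Matrix.smul_mul, Matrix.mul_smul, smul_smul, inv_mul_cancel₀ hc0.ne', one_smul,
        hSval]
    calc M * N = M * (c⁻¹ • S)ᵀ := by rw [hN, Matrix.transpose_smul]
      _ = (Mᵀ)ᵀ * (c⁻¹ • S)ᵀ := by rw [Matrix.transpose_transpose]
      _ = ((c⁻¹ • S) * Mᵀ)ᵀ := by rw [Matrix.transpose_mul]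
      _ = 1 := by rw [h1, Matrix.transpose_one]
  have hNM : N * M = 1 := mul_eq_one_comm.mp hMN
  have hMinv : M⁻¹ = N := Matrix.inv_eq_right_inv hMN
  have hMunit : IsUnit M := ⟨⟨M, N, hMN, hNM⟩, rfl⟩
  -- entries of S: nonneg and diagonal ≥ 1
  have hpow : ∀ m : ℕ, ∀ i j, 0 ≤ (x ^ m) i j := by
    intro m
    induction m with
    | zero => intro i j; by_cases h : i = j <;> simp [Matrix.one_apply, h]
    | succ m ih =>
      intro i j
      rw [pow_succ, Matrix.mul_apply]
      exact Finset.sum_nonneg fun k _ => mul_nonneg (ih i k) (hxentry k j)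
  have hSrec : S = 1 + x * S := by
    have h := hvalS
    rw [Matrix.sub_mul, Matrix.one_mul] at h
    exact (sub_eq_iff_eq_add.mp h)
  have hSiter : ∀ m : ℕ, S = (∑ k ∈ Finset.range m, x ^ k) + x ^ m * S := by
    intro m
    induction m with
    | zero => simp
    | succ m ih =>
      rw [Finset.sum_range_succ]
      calc S = (∑ k ∈ Finset.range m, x ^ k) + x ^ m * S := ih
        _ = (∑ k ∈ Finset.range m, x ^ k) + x ^ m * (1 + x * S) := by rw [← hSrec]
        _ = (∑ k ∈ Finset.range m, x ^ k) + (x ^ m + x ^ m * (x * S)) := by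
            rw [Matrix.mul_add, Matrix.mul_one]
        _ = ((∑ k ∈ Finset.range m, x ^ k) + x ^ m) + x ^ (m + 1) * S := by
            rw [pow_succ, Matrix.mul_assoc]; abel
  have hbound : ∀ m : ℕ, 1 ≤ m → ∀ i j, |(x ^ m * S) i j| ≤ ‖x‖ ^ m * ‖S‖ := by
    intro m hm i j
    calc |(x ^ m * S) i j| ≤ ‖x ^ m * S‖ := entry_abs_le_linfty_norm _ i j
      _ ≤ ‖x ^ m‖ * ‖S‖ := norm_mul_le _ _
      _ ≤ ‖x‖ ^ m * ‖S‖ :=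
        mul_le_mul_of_nonneg_right (norm_pow_le' x hm) (norm_nonneg _)
  have htend : Tendsto (fun m : ℕ => ‖x‖ ^ m * ‖S‖) atTop (nhds 0) := by
    simpa using
      (tendsto_pow_atTop_nhds_zero_of_lt_one (norm_nonneg x)
        (by simpa using hxnorm)).mul_const ‖S‖
  have hSnonneg : ∀ i j, 0 ≤ S i j := by
    intro i j
    have hev : ∀ᶠ m : ℕ in atTop, -(‖x‖ ^ m * ‖S‖) ≤ S i j := by
      filter_upwards [eventually_ge_atTop 1] with m hm
      have h1 := hSiter m
      have h2 : S i j = (∑ k ∈ Finset.range m, x ^ k) i j + (x ^ m * S) i j := by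
        conv_lhs => rw [h1]
        rfl
      have h3 : 0 ≤ (∑ k ∈ Finset.range m, x ^ k) i j := by
        rw [Matrix.sum_apply]
        exact Finset.sum_nonneg fun k _ => hpow k i j
      have h4 := (abs_le.mp (hbound m hm i j)).1
      linarith
    have : Tendsto (fun m : ℕ => -(‖x‖ ^ m * ‖S‖)) atTop (nhds 0) := by
      simpa using htend.neg
    exact le_of_tendsto this hev
  have hSdiag : ∀ i, 1 ≤ S i i := by
    intro i
    have hev : ∀ᶠ m : ℕ in atTop, 1 - ‖x‖ ^ m * ‖S‖ ≤ S i i := by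
      filter_upwards [eventually_ge_atTop 1] with m hm
      have h1 := hSiter m
      have h2 : S i i = (∑ k ∈ Finset.range m, x ^ k) i i + (x ^ m * S) i i := by
        conv_lhs => rw [h1]
        rfl
      have h3 : 1 ≤ (∑ k ∈ Finset.range m, x ^ k) i i := by
        rw [Matrix.sum_apply]
        have hmem : (0 : ℕ) ∈ Finset.range m := Finset.mem_range.mpr hm
        have := Finset.single_le_sum (f := fun k => (x ^ k) i i)
          (fun k _ => hpow k i i) hmem
        simpa [Matrix.one_apply] using this
      have h4 := (abs_le.mp (hbound m hm i i)).1
      linarith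
    have : Tendsto (fun m : ℕ => 1 - ‖x‖ ^ m * ‖S‖) atTop (nhds 1) := by
      simpa using (tendsto_const_nhds (x := (1:ℝ))).sub htend
    simpa using le_of_tendsto this hev
  -- column sums of M
  have hMcol : ∀ j, ∑ i, M i j = 1 := by
    intro j
    simp [hM, Matrix.sub_apply, Matrix.one_apply, Finset.sum_sub_distrib, hAcol j,
      Finset.sum_ite_eq, mem_univ]
  refine ⟨hMunit, ?_, ?_, ?_⟩
  · intro i j
    rw [hMinv]
    simp only [hN, Matrix.smul_apply, Matrix.transpose_apply]
    exact mul_nonneg (inv_nonneg.mpr hc0.le) (hSnonneg j i)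
  · intro i
    rw [hMinv]
    simp only [hN, Matrix.smul_apply, Matrix.transpose_apply]
    exact mul_pos (inv_pos.mpr hc0) (lt_of_lt_of_le zero_lt_one (hSdiag i))
  · intro j
    rw [hMinv]
    have h1 : ∑ i, N i j = ∑ k, (∑ i, M i k) * N k j := by
      refine Finset.sum_congr rfl fun k _ => ?_
      rw [hMcol k, one_mul]
    rw [h1]
    have h2 : ∑ k, (∑ i, M i k) * N k j = ∑ i, ∑ k, M i k * N k j := by
      rw [Finset.sum_comm]
      exact Finset.sum_congr rfl fun k _ => by rw [Finset.sum_mul]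
    rw [h2]
    have h3 : ∀ i, ∑ k, M i k * N k j = (1 : Matrix (Fin n) (Fin n) ℝ) i j := by
      intro i; rw [← Matrix.mul_apply, hMN]
    simp_rw [h3]
    simp [Matrix.one_apply, Finset.sum_ite_eq, mem_univ]
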